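/- Suppose f : 𝔻 → ℂ is continuously differentiable and there exists ε > 0 with f#(z) > ε for all z ∈ 𝔻, where f#(z) = (|f_z(z)|+|f_{z̄}(z)|)/(1+|f(z)|²). Let ρ_n > 0 with ρ_n → 0, (z_n) ⊂ 𝔻, ξ₀ ∈ ℂ such that z_n + ρ_nξ₀ ∈ 𝔻 and |F_n(ξ₀)| = ρ_n²|f(z_n + ρ_nξ₀)| ≥ c > 0 for all n. Then the rescaled spherical derivatives F_n#(ξ₀) := ρ_n³(|f_z(z_n+ρ_nξ₀)|+|f_{z̄}(z_n+ρ_nξ₀)|)/(1 + ρ_n⁴|f(z_n+ρ_nξ₀)|²) tend to ∞ as n → ∞. -/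

import Mathlib

open Complex Metric Filter Topology

/-- Wirtinger derivative ∂/∂z of a real-differentiable function. -/
noncomputable def wderiv (f : ℂ → ℂ) (z : ℂ) : ℂ :=
  (fderiv ℝ f z 1 - Complex.I * fderiv ℝ f z Complex.I) / 2

/-- Wirtinger derivative ∂/∂z̄ of a real-differentiable function. -/
noncomputable def wderivBar (f : ℂ → ℂ) (z : ℂ) : ℂ :=
  (fderiv ℝ f z 1 + Complex.I * fderiv ℝ f z Complex.I) / 2

/-- Spherical derivative f#(z) = (|f_z| + |f_z̄|)/(1+|f|²). -/
noncomputable def sphDeriv (f : ℂ → ℂ) (z : ℂ) : ℝ :=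
  (‖wderiv f z‖ + ‖wderivBar f z‖) / (1 + (‖f z‖) ^ 2)

/-- Chordal distance on ℂ. -/
noncomputable def chordal (z w : ℂ) : ℝ :=
  ‖z - w‖ / (Real.sqrt (1 + (‖z‖) ^ 2) * Real.sqrt (1 + (‖w‖) ^ 2))

/-- If f# > ε on 𝔻 and ρ_n²|f(z_n+ρ_nξ₀)| ≥ c > 0, then the rescaled spherical
derivatives F_n#(ξ₀) tend to infinity. -/
theorem rescaled_sphDeriv_tendsto_atTop (f : ℂ → ℂ)
    (hf : ContDiffOn ℝ 1 f (ball (0 : ℂ) 1))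
    (ε : ℝ) (hε : 0 < ε)
    (hsph : ∀ z ∈ ball (0 : ℂ) 1, ε < sphDeriv f z)
    (z : ℕ → ℂ) (hz : ∀ n, z n ∈ ball (0 : ℂ) 1)
    (ρ : ℕ → ℝ) (hρ : ∀ n, 0 < ρ n) (hρlim : Tendsto ρ atTop (nhds 0))
    (ξ₀ : ℂ) (hin : ∀ n, z n + (ρ n : ℂ) * ξ₀ ∈ ball (0 : ℂ) 1)
    (c : ℝ) (hc : 0 < c)
    (hcbd : ∀ n, c ≤ (ρ n) ^ 2 * ‖f (z n + (ρ n : ℂ) * ξ₀)‖) :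
    Tendsto (fun n => (ρ n) ^ 3
        * (‖wderiv f (z n + (ρ n : ℂ) * ξ₀)‖
            + ‖wderivBar f (z n + (ρ n : ℂ) * ξ₀)‖)
        / (1 + (ρ n) ^ 4 * (‖f (z n + (ρ n : ℂ) * ξ₀)‖) ^ 2))
      atTop atTop := by

  set K : ℝ := ε * c ^ 2 / (1 + c ^ 2) with hK
  have hKpos : 0 < K := by positivity
  have hlow : Tendsto (fun n => K * (ρ n)⁻¹) atTop atTop := by
    refine Tendsto.const_mul_atTop hKpos ?_
    refine Filter.Tendsto.inv_tendsto_nhdsGT_zero ?_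
    exact tendsto_nhdsWithin_of_tendsto_nhds_of_eventually_within ρ hρlim
      (Eventually.of_forall fun n => hρ n)
  refine tendsto_atTop_mono ?_ hlow
  intro n
  set w := z n + (ρ n : ℂ) * ξ₀
  set A := ‖wderiv f w‖ + ‖wderivBar f w‖ with hA
  set B := ‖f w‖ with hB
  have hBpos : 0 < 1 + B ^ 2 := by positivity
  have hAlb : ε * (1 + B ^ 2) < A := by
    have := hsph w (hin n)
    rw [sphDeriv] at this
    calc ε * (1 + B ^ 2) < ((‖wderiv f w‖ + ‖wderivBar f w‖) /
        (1 + (‖f w‖) ^ 2)) * (1 + B ^ 2) := by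
          exact mul_lt_mul_of_pos_right this hBpos
      _ = A := by field_simp; rw [hA, hB]; ring
  have hcb : c ≤ (ρ n) ^ 2 * B := hcbd n
  have hρn := hρ n
  have hrw : K * (ρ n)⁻¹ = ε * c ^ 2 / ((1 + c ^ 2) * ρ n) := by
    rw [hK]; field_simp
  rw [hrw, div_le_div_iff₀ (by positivity) (by positivity)]
  have hsq : c * c ≤ (ρ n ^ 2 * B) * (ρ n ^ 2 * B) :=
    mul_le_mul hcb hcb hc.le (by positivity)
  nlinarith [mul_le_mul_of_nonneg_left hsq hε.le,
    mul_le_mul_of_nonneg_left hAlb.le (by positivity : (0:ℝ) ≤ ρ n ^ 4 * (1 + c ^ 2)),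
    mul_nonneg (mul_nonneg hε.le (sq_nonneg (ρ n ^ 2))) (sq_nonneg c),
    mul_nonneg (mul_nonneg (mul_nonneg hε.le (sq_nonneg c)) (sq_nonneg (ρ n ^ 2))) (sq_nonneg B)]
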